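/- For all y in ℝ, the integral ∫_{|y|}^∞ Φ(-s) · (2y²)/(s²√(s²-y²)) ds equals e^{-y²/2} - √(2π)·|y|·Φ(-|y|), where Φ is the standard normal CDF. -/

import Mathlib

open MeasureTheory Set

/-- The standard normal cumulative distribution function. -/
noncomputable def gaussCdf (x : ℝ) : ℝ :=
  (1 / Real.sqrt (2 * Real.pi)) * ∫ t in Set.Iio x, Real.exp (-t ^ 2 / 2)

namespace GaussAux

open Real Filter Topology

noncomputable def E (t : ℝ) : ℝ := Real.exp (-t ^ 2 / 2)

lemma E_eq (t : ℝ) : E t = Real.exp (-(1/2 : ℝ) * t ^ 2) := by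
  unfold E; ring_nf

lemma integrable_E : Integrable E := by
  simp only [funext E_eq]
  exact integrable_exp_neg_mul_sq (by norm_num)

lemma E_pos (t : ℝ) : 0 < E t := Real.exp_pos _

lemma continuous_E : Continuous E := by
  unfold E; continuity

lemma sqrt_two_pi_pos : (0:ℝ) < Real.sqrt (2 * Real.pi) :=
  Real.sqrt_pos.2 (by positivity)

lemma integral_E : ∫ t, E t = Real.sqrt (2 * Real.pi) := by
  simp only [funext E_eq]
  rw [integral_gaussian, show Real.pi / (1/2) = 2*Real.pi by ring]

/-- rewrite gaussCdf at a negative argument as a tail integral -/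
lemma gaussCdf_neg (x : ℝ) :
    gaussCdf (-x) = (Real.sqrt (2 * Real.pi))⁻¹ * ∫ t in Ioi x, E t := by
  unfold gaussCdf
  rw [one_div]
  congr 1
  rw [← integral_Iic_eq_integral_Iio, ← integral_comp_neg_Ioi]
  apply setIntegral_congr_fun measurableSet_Ioi
  intro t _
  simp [E, neg_sq]

lemma gaussCdf_nonneg (x : ℝ) : 0 ≤ gaussCdf x := by
  unfold gaussCdf
  apply mul_nonneg (by positivity)
  apply integral_nonneg
  intro t
  exact (E_pos t).le

lemma gaussCdf_le_one (x : ℝ) : gaussCdf x ≤ 1 := by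
  unfold gaussCdf
  have h : (∫ t in Set.Iio x, Real.exp (-t ^ 2 / 2)) ≤ ∫ t, E t :=
    setIntegral_le_integral integrable_E (Eventually.of_forall fun t => (E_pos t).le)
  rw [integral_E] at h
  calc (1 / Real.sqrt (2 * Real.pi)) * ∫ t in Set.Iio x, Real.exp (-t ^ 2 / 2)
      ≤ (1 / Real.sqrt (2 * Real.pi)) * Real.sqrt (2 * Real.pi) := by
        apply mul_le_mul_of_nonneg_left h (by positivity)
    _ = 1 := by
        field_simp

lemma key_split (x : ℝ) : (∫ t in Iio x, E t) = (∫ t in Iio (0:ℝ), E t) + ∫ t in (0:ℝ)..x, E t := by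
  have h2 := intervalIntegral.integral_Iic_sub_Iic
    (integrable_E.integrableOn (s := Iic (0:ℝ))) (integrable_E.integrableOn (s := Iic x))
  rw [integral_Iic_eq_integral_Iio, integral_Iic_eq_integral_Iio] at h2
  linarith

lemma hasDerivAt_gaussCdf (x : ℝ) :
    HasDerivAt gaussCdf ((Real.sqrt (2 * Real.pi))⁻¹ * E x) x := by
  have hd : HasDerivAt (fun u => ∫ t in (0:ℝ)..u, E t) (E x) x := by
    apply intervalIntegral.integral_hasDerivAt_right
      (integrable_E.intervalIntegrable)
      (continuous_E.stronglyMeasurable.stronglyMeasurableAtFilter)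
      (continuous_E.continuousAt)
  have hd2 : HasDerivAt
      (fun u => (Real.sqrt (2 * Real.pi))⁻¹ * ((∫ t in Iio (0:ℝ), E t) + ∫ t in (0:ℝ)..u, E t))
      ((Real.sqrt (2 * Real.pi))⁻¹ * E x) x := (hd.const_add _).const_mul _
  convert hd2 using 2 with u
  unfold gaussCdf
  rw [one_div, show (fun t : ℝ => Real.exp (-t ^ 2 / 2)) = E from rfl, key_split u]

lemma tail_split (x : ℝ) : (∫ t in Ioi x, E t)
    = (∫ t, E t) - ((∫ t in Iio (0:ℝ), E t) + ∫ t in (0:ℝ)..x, E t) := by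
  have h1 := integral_add_compl (measurableSet_Iic (a := x)) integrable_E
  rw [compl_Iic, integral_Iic_eq_integral_Iio] at h1
  have h2 := key_split x
  linarith

lemma tendsto_tail : Tendsto (fun x : ℝ => ∫ t in Ioi x, E t) atTop (𝓝 0) := by
  have h0 : Tendsto (fun x : ℝ => ∫ t in (0:ℝ)..x, E t) atTop (𝓝 (∫ t in Ioi (0:ℝ), E t)) :=
    intervalIntegral_tendsto_integral_Ioi 0 integrable_E.integrableOn tendsto_id
  have h1 : Tendsto (fun x : ℝ => (∫ t, E t) - ((∫ t in Iio (0:ℝ), E t) + ∫ t in (0:ℝ)..x, E t))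
      atTop (𝓝 ((∫ t, E t) - ((∫ t in Iio (0:ℝ), E t) + ∫ t in Ioi (0:ℝ), E t))) :=
    tendsto_const_nhds.sub (tendsto_const_nhds.add h0)
  have h2 : (∫ t, E t) - ((∫ t in Iio (0:ℝ), E t) + ∫ t in Ioi (0:ℝ), E t) = 0 := by
    have h3 := integral_add_compl (measurableSet_Iic (a := (0:ℝ))) integrable_E
    rw [compl_Iic, integral_Iic_eq_integral_Iio] at h3
    linarith
  rw [h2] at h1
  apply h1.congr
  intro x
  rw [tail_split x]

section Main

variable {a : ℝ} (ha : 0 < a)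

noncomputable def R (a x : ℝ) : ℝ := Real.sqrt (x ^ 2 + a ^ 2)

lemma R_pos (a x : ℝ) (ha : 0 < a) : 0 < R a x := by
  apply Real.sqrt_pos.2; positivity

lemma R_sq (a x : ℝ) (ha : 0 < a) : (R a x) ^ 2 = x ^ 2 + a ^ 2 := by
  exact Real.sq_sqrt (by positivity)

lemma hasDerivAt_R (ha : 0 < a) (x : ℝ) : HasDerivAt (R a) (x / R a x) x := by
  have h : HasDerivAt (fun x : ℝ => x ^ 2 + a ^ 2) (2 * x) x := by
    simpa using (hasDerivAt_pow 2 x).add_const (a ^ 2)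
  have hne : x ^ 2 + a ^ 2 ≠ 0 := by positivity
  have := h.sqrt hne
  refine this.congr_deriv (Eq.symm ?_)
  unfold R
  rw [div_eq_div_iff (by positivity) (by positivity)]
  ring

lemma hasDerivAt_p (ha : 0 < a) (x : ℝ) :
    HasDerivAt (fun x => 2 * x / R a x)
      (2 * a ^ 2 / ((x ^ 2 + a ^ 2) * R a x)) x := by
  have hR0 : R a x ≠ 0 := ne_of_gt (R_pos a x ha)
  have hs : R a x ^ 2 = x ^ 2 + a ^ 2 := R_sq a x ha
  have h2x : HasDerivAt (fun x : ℝ => 2 * x) 2 x := by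
    simpa using (hasDerivAt_id x).const_mul (2:ℝ)
  have := h2x.div (hasDerivAt_R ha x) hR0
  refine this.congr_deriv (Eq.symm ?_)
  have hne : x ^ 2 + a ^ 2 ≠ 0 := by positivity
  field_simp
  linear_combination (-x^2) * hs

lemma continuous_R : Continuous (R a) := Real.continuous_sqrt.comp (by continuity)

lemma continuous_gaussCdf : Continuous gaussCdf :=
  continuous_iff_continuousAt.2 fun x => (hasDerivAt_gaussCdf x).continuousAt

include ha

lemma tendsto_p : Tendsto (fun x => 2 * x / R a x) atTop (𝓝 2) := by
  have h : Tendsto (fun x : ℝ => a ^ 2 / x ^ 2) atTop (𝓝 0) := by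
    have h1 : Tendsto (fun x : ℝ => x ^ 2) atTop atTop := tendsto_pow_atTop (by norm_num)
    have h2 := h1.inv_tendsto_atTop
    have h3 := h2.const_mul (a ^ 2)
    simpa [div_eq_mul_inv] using h3
  have hc : ContinuousAt (fun t : ℝ => 2 / Real.sqrt (1 + t)) 0 := by
    apply ContinuousAt.div continuousAt_const
      (Real.continuous_sqrt.continuousAt.comp (by fun_prop))
    simp
  have h2 : Tendsto (fun x : ℝ => 2 / Real.sqrt (1 + a ^ 2 / x ^ 2)) atTop
      (𝓝 (2 / Real.sqrt (1 + 0))) := hc.tendsto.comp h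
  simp only [add_zero, Real.sqrt_one, div_one] at h2
  apply h2.congr'
  filter_upwards [eventually_gt_atTop (0:ℝ)] with x hx
  unfold R
  rw [show x ^ 2 + a ^ 2 = x ^ 2 * (1 + a ^ 2 / x ^ 2) by field_simp,
    Real.sqrt_mul (sq_nonneg x), Real.sqrt_sq hx.le]
  rw [div_eq_div_iff (by positivity) (by positivity)]
  ring

lemma hasDerivAt_u (x : ℝ) : HasDerivAt (fun x => gaussCdf (-(R a x)))
    (-((Real.sqrt (2 * Real.pi))⁻¹ * Real.exp (-(x ^ 2 + a ^ 2) / 2) * (x / R a x))) x := by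
  have h2 : HasDerivAt (fun x => -(R a x)) (-(x / R a x)) x := (hasDerivAt_R ha x).neg
  have h3 := (hasDerivAt_gaussCdf (-(R a x))).comp x h2
  refine h3.congr_deriv (Eq.symm ?_)
  unfold E
  rw [neg_sq, R_sq a x ha]
  ring

/-- Step 1: substitution `s = √(x² + a²)`. -/
lemma step1 :
    (∫ s in Set.Ioi a, gaussCdf (-s) * (2 * a ^ 2) / (s ^ 2 * Real.sqrt (s ^ 2 - a ^ 2)))
      = ∫ x in Ioi (0:ℝ), gaussCdf (-(R a x)) * (2 * a ^ 2 / ((x ^ 2 + a ^ 2) * R a x)) := by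
  have himg : R a '' (Ioi 0) = Ioi a := by
    ext s
    constructor
    · rintro ⟨x, hx, rfl⟩
      simp only [mem_Ioi] at hx ⊢
      unfold R
      rw [Real.lt_sqrt ha.le]
      nlinarith
    · intro hs
      simp only [mem_Ioi] at hs
      have hs0 : 0 < s := lt_trans ha hs
      refine ⟨Real.sqrt (s ^ 2 - a ^ 2), ?_, ?_⟩
      · simp only [mem_Ioi]
        apply Real.sqrt_pos.2
        nlinarith
      · unfold R
        rw [Real.sq_sqrt (by nlinarith)]
        rw [show s ^ 2 - a ^ 2 + a ^ 2 = s ^ 2 by ring, Real.sqrt_sq hs0.le]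
  have hinj : InjOn (R a) (Ioi 0) := by
    intro x hx x' hx' h
    simp only [mem_Ioi] at hx hx'
    have h2 : x ^ 2 + a ^ 2 = x' ^ 2 + a ^ 2 := by
      rw [← R_sq a x ha, ← R_sq a x' ha, h]
    have h3 : x ^ 2 = x' ^ 2 := by linarith
    calc x = Real.sqrt (x ^ 2) := (Real.sqrt_sq hx.le).symm
      _ = Real.sqrt (x' ^ 2) := by rw [h3]
      _ = x' := Real.sqrt_sq hx'.le
  have hderiv : ∀ x ∈ Ioi (0:ℝ), HasDerivWithinAt (R a) (x / R a x) (Ioi 0) x :=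
    fun x _ => (hasDerivAt_R ha x).hasDerivWithinAt
  rw [← himg, integral_image_eq_integral_abs_deriv_smul measurableSet_Ioi hderiv hinj]
  apply setIntegral_congr_fun measurableSet_Ioi
  intro x hx
  simp only [mem_Ioi] at hx
  have hR0 : 0 < R a x := R_pos a x ha
  simp only [smul_eq_mul]
  rw [R_sq a x ha, show x ^ 2 + a ^ 2 - a ^ 2 = x ^ 2 by ring,
    Real.sqrt_sq hx.le, abs_of_pos (by positivity)]
  have hne : x ^ 2 + a ^ 2 ≠ 0 := by positivity
  field_simp

/-- Step 2: integration by parts. -/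
lemma step2 :
    (∫ x in Ioi (0:ℝ), gaussCdf (-(R a x)) * (2 * a ^ 2 / ((x ^ 2 + a ^ 2) * R a x)))
      = (Real.sqrt (2 * Real.pi))⁻¹ * Real.exp (-a ^ 2 / 2)
        * ∫ x in Ioi (0:ℝ), 2 * x ^ 2 * E x / (x ^ 2 + a ^ 2) := by
  set c : ℝ := (Real.sqrt (2 * Real.pi))⁻¹ with hc
  have hc0 : 0 < c := inv_pos.2 sqrt_two_pi_pos
  set u : ℝ → ℝ := fun x => gaussCdf (-(R a x)) with hu_def
  set u' : ℝ → ℝ := fun x => -(c * Real.exp (-(x ^ 2 + a ^ 2) / 2) * (x / R a x)) with hu'_def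
  set v : ℝ → ℝ := fun x => 2 * x / R a x with hv_def
  set v' : ℝ → ℝ := fun x => 2 * a ^ 2 / ((x ^ 2 + a ^ 2) * R a x) with hv'_def
  have hR0 : ∀ x : ℝ, 0 < R a x := fun x => R_pos a x ha
  have hu : ∀ x ∈ Ioi (0:ℝ), HasDerivAt u (u' x) x := fun x _ => hasDerivAt_u ha x
  have hv : ∀ x ∈ Ioi (0:ℝ), HasDerivAt v (v' x) x := fun x _ => hasDerivAt_p ha x
  have hcont_v : Continuous v := by
    apply Continuous.div (by continuity) (continuous_R (a := a))
    exact fun x => ne_of_gt (hR0 x)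
  have hcont_u : Continuous u :=
    continuous_gaussCdf.comp (continuous_R (a := a)).neg
  have hcont_u' : Continuous u' := by
    apply Continuous.neg
    apply Continuous.mul (by continuity)
    exact Continuous.div continuous_id (continuous_R (a := a)) fun x => ne_of_gt (hR0 x)
  have hcont_v' : Continuous v' := by
    apply Continuous.div continuous_const
      ((by continuity : Continuous fun x : ℝ => x ^ 2 + a ^ 2).mul (continuous_R (a := a)))
    intro x
    exact ne_of_gt (mul_pos (by positivity) (hR0 x))
  have hu_nonneg : ∀ x : ℝ, 0 ≤ u x := fun x => gaussCdf_nonneg _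
  have hu_le : ∀ x : ℝ, u x ≤ 1 := fun x => gaussCdf_le_one _
  -- tendsto at infinity
  have hRtop : Tendsto (R a) atTop atTop := by
    apply tendsto_atTop_mono (fun x => ?_) tendsto_id
    calc (id x : ℝ) = x := rfl
      _ ≤ |x| := le_abs_self x
      _ = Real.sqrt (x ^ 2) := (Real.sqrt_sq_eq_abs x).symm
      _ ≤ R a x := Real.sqrt_le_sqrt (by nlinarith)
  have hu_top : Tendsto u atTop (𝓝 0) := by
    have h1 : u = fun x => c * ∫ t in Ioi (R a x), E t := by
      funext x; exact gaussCdf_neg (R a x)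
    rw [h1]
    have := (tendsto_tail.comp hRtop).const_mul c
    simpa using this
  have hv_top : Tendsto v atTop (𝓝 2) := tendsto_p ha
  have h_infty : Tendsto (u * v) atTop (𝓝 0) := by
    have := hu_top.mul hv_top
    exact (by simpa using this : Tendsto (fun x => u x * v x) atTop (𝓝 0))
  have h_zero : Tendsto (u * v) (𝓝[>] (0:ℝ)) (𝓝 0) := by
    have hcont : Tendsto (u * v) (𝓝 0) (𝓝 (u 0 * v 0)) :=
      ((hcont_u.mul hcont_v).tendsto 0)
    have hv0 : v 0 = 0 := by simp [hv_def]
    rw [hv0, mul_zero] at hcont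
    exact hcont.mono_left nhdsWithin_le_nhds
  -- integrability
  have hv'_int : IntegrableOn v' (Ioi (0:ℝ)) := by
    apply integrableOn_Ioi_deriv_of_nonneg (hcont_v.continuousWithinAt) hv
      (fun x hx => ?_) hv_top
    have := hR0 x
    positivity
  have huv' : IntegrableOn (u * v') (Ioi (0:ℝ)) := by
    apply Integrable.mono hv'_int
      ((hcont_u.mul hcont_v').aestronglyMeasurable.restrict)
    apply Eventually.of_forall
    intro x
    simp only [Pi.mul_apply, norm_mul, Real.norm_eq_abs]
    calc |u x| * |v' x| ≤ 1 * |v' x| := by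
          apply mul_le_mul_of_nonneg_right _ (abs_nonneg _)
          rw [abs_of_nonneg (hu_nonneg x)]; exact hu_le x
      _ = |v' x| := one_mul _
  have hu'v : IntegrableOn (u' * v) (Ioi (0:ℝ)) := by
    apply Integrable.mono ((integrable_E.const_mul (2 * c)).integrableOn (s := Ioi 0))
      ((hcont_u'.mul hcont_v).aestronglyMeasurable.restrict)
    rw [ae_restrict_iff' measurableSet_Ioi]
    apply Eventually.of_forall
    intro x hx
    simp only [mem_Ioi] at hx
    have hRx := hR0 x
    have hxR : x / R a x ≤ 1 := by
      rw [div_le_one hRx]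
      calc x = Real.sqrt (x ^ 2) := (Real.sqrt_sq hx.le).symm
        _ ≤ R a x := Real.sqrt_le_sqrt (by nlinarith)
    have hexp : Real.exp (-(x ^ 2 + a ^ 2) / 2) ≤ E x := by
      unfold E
      apply Real.exp_le_exp.2
      nlinarith
    simp only [Pi.mul_apply, norm_mul, Real.norm_eq_abs, hu'_def, hv_def, abs_neg]
    have hE0 : 0 < E x := E_pos x
    have h1 : |c * Real.exp (-(x ^ 2 + a ^ 2) / 2) * (x / R a x)| ≤ c * E x := by
      rw [abs_of_nonneg (by positivity)]
      calc c * Real.exp (-(x ^ 2 + a ^ 2) / 2) * (x / R a x)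
          ≤ c * Real.exp (-(x ^ 2 + a ^ 2) / 2) * 1 := by
            apply mul_le_mul_of_nonneg_left hxR (by positivity)
        _ ≤ c * E x := by rw [mul_one]; exact mul_le_mul_of_nonneg_left hexp hc0.le
    have h2 : |2 * x / R a x| ≤ 2 := by
      rw [abs_of_nonneg (by positivity)]
      rw [mul_div_assoc]
      calc 2 * (x / R a x) ≤ 2 * 1 := by
            apply mul_le_mul_of_nonneg_left hxR (by norm_num)
        _ = 2 := by norm_num
    calc |c * Real.exp (-(x ^ 2 + a ^ 2) / 2) * (x / R a x)| * |2 * x / R a x|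
        ≤ (c * E x) * 2 := mul_le_mul h1 h2 (abs_nonneg _) (by positivity)
      _ = |2| * |c| * |E x| := by
          rw [abs_of_nonneg (by norm_num : (0:ℝ) ≤ 2), abs_of_nonneg hc0.le,
            abs_of_nonneg (E_pos x).le]
          ring
  -- integration by parts
  have hibp := integral_Ioi_mul_deriv_eq_deriv_mul hu hv huv' hu'v h_zero h_infty
  have goal1 : (∫ x in Ioi (0:ℝ), u x * v' x) = - ∫ x in Ioi (0:ℝ), u' x * v x := by
    rw [hibp]; ring
  have goal2 : (- ∫ x in Ioi (0:ℝ), u' x * v x)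
      = ∫ x in Ioi (0:ℝ), (c * Real.exp (-a ^ 2 / 2)) * (2 * x ^ 2 * E x / (x ^ 2 + a ^ 2)) := by
    rw [← integral_neg]
    apply setIntegral_congr_fun measurableSet_Ioi
    intro x _
    have hRx := hR0 x
    have hs : R a x ^ 2 = x ^ 2 + a ^ 2 := R_sq a x ha
    have hexp2 : Real.exp (-(x ^ 2 + a ^ 2) / 2) = Real.exp (-a ^ 2 / 2) * E x := by
      unfold E
      rw [← Real.exp_add]
      ring_nf
    simp only [hu'_def, hv_def, neg_neg]
    rw [hexp2]
    have hne : x ^ 2 + a ^ 2 ≠ 0 := by positivity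
    field_simp
    linear_combination (-(E x * x ^ 2)) * hs
  rw [goal1, goal2, integral_const_mul]

omit ha in
lemma integrable_EQ (ha : 0 < a) : IntegrableOn (fun x => E x / (x ^ 2 + a ^ 2)) (Ioi (0:ℝ)) := by
  apply Integrable.mono ((integrable_E.const_mul (a ^ 2)⁻¹).integrableOn (s := Ioi 0))
  · apply Continuous.aestronglyMeasurable (Continuous.div continuous_E (by continuity) ?_)
      |>.restrict
    intro x; positivity
  · apply Eventually.of_forall
    intro x
    have h1 : 0 < x ^ 2 + a ^ 2 := by positivity
    simp only [Real.norm_eq_abs]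
    rw [abs_of_nonneg (div_nonneg (E_pos x).le h1.le),
      abs_of_nonneg (mul_nonneg (by positivity) (E_pos x).le)]
    rw [div_le_iff₀ h1]
    rw [mul_comm ((a ^ 2)⁻¹) (E x), mul_assoc]
    nth_rewrite 1 [show E x = E x * 1 by ring]
    apply mul_le_mul_of_nonneg_left _ (E_pos x).le
    rw [← div_eq_inv_mul, le_div_iff₀ (by positivity : (0:ℝ) < a ^ 2)]
    nlinarith

omit ha in
lemma integral_E_Ioi : (∫ x in Ioi (0:ℝ), E x) = Real.sqrt (2 * Real.pi) / 2 := by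
  simp only [E_eq]
  rw [integral_gaussian_Ioi, show Real.pi / (1/2) = 2 * Real.pi by ring]

omit ha in
lemma hpt_inner (ha : 0 < a) (x : ℝ) :
    E x / (x ^ 2 + a ^ 2) = ∫ v in Ioi (0:ℝ), E x * Real.exp (-((x ^ 2 + a ^ 2) * v)) := by
  have hxa : (0:ℝ) < x ^ 2 + a ^ 2 := by positivity
  rw [integral_const_mul]
  have h := integral_comp_mul_left_Ioi (fun s => Real.exp (-s)) 0 hxa
  simp only [mul_zero] at h
  rw [h, integral_exp_neg_Ioi]
  simp only [smul_eq_mul, neg_zero, Real.exp_zero, mul_one, div_eq_mul_inv]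

omit ha in
lemma inner_gauss (ha : 0 < a) (v : ℝ) (hv : 0 < v) :
    (∫ x in Ioi (0:ℝ), E x * Real.exp (-((x ^ 2 + a ^ 2) * v)))
      = Real.exp (-(a ^ 2 * v)) * (Real.sqrt (Real.pi / (v + 1/2)) / 2) := by
  have hpt : ∀ x ∈ Ioi (0:ℝ), E x * Real.exp (-((x ^ 2 + a ^ 2) * v))
      = Real.exp (-(a ^ 2 * v)) * Real.exp (-(v + 1/2) * x ^ 2) := by
    intro x _
    unfold E
    rw [← Real.exp_add, ← Real.exp_add]
    ring_nf
  rw [setIntegral_congr_fun measurableSet_Ioi hpt, integral_const_mul,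
    integral_gaussian_Ioi]

omit ha in
lemma prod_int (ha : 0 < a) :
    Integrable (Function.uncurry fun x v => E x * Real.exp (-((x ^ 2 + a ^ 2) * v)))
      ((volume.restrict (Ioi 0)).prod (volume.restrict (Ioi 0))) := by
  have hcont : Continuous (Function.uncurry fun x v : ℝ => E x * Real.exp (-((x ^ 2 + a ^ 2) * v))) := by
    apply Continuous.mul (continuous_E.comp continuous_fst)
    apply Real.continuous_exp.comp
    fun_prop
  rw [integrable_prod_iff hcont.aestronglyMeasurable]
  constructor
  · apply Eventually.of_forall
    intro x
    show Integrable (fun v : ℝ => E x * Real.exp (-((x ^ 2 + a ^ 2) * v))) (volume.restrict (Ioi 0))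
    have h := (exp_neg_integrableOn_Ioi 0 (by positivity : (0:ℝ) < x ^ 2 + a ^ 2)).const_mul (E x)
    simpa only [neg_mul] using h
  · have heq : ∀ x ∈ Ioi (0:ℝ),
        (∫ v in Ioi (0:ℝ), ‖E x * Real.exp (-((x ^ 2 + a ^ 2) * v))‖)
          = E x / (x ^ 2 + a ^ 2) := by
      intro x _
      rw [show (fun v => ‖E x * Real.exp (-((x ^ 2 + a ^ 2) * v))‖)
          = fun v => E x * Real.exp (-((x ^ 2 + a ^ 2) * v)) from funext fun v =>
            norm_of_nonneg (mul_nonneg (E_pos x).le (Real.exp_pos _).le)]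
      exact (hpt_inner ha x).symm
    apply Integrable.congr (integrable_EQ ha)
    rw [EventuallyEq, ae_restrict_iff' measurableSet_Ioi]
    exact Eventually.of_forall fun x hx => (heq x hx).symm

/-- the key exponential-over-quadratic integral. -/
lemma step4 :
    (∫ x in Ioi (0:ℝ), E x / (x ^ 2 + a ^ 2))
      = Real.exp (a ^ 2 / 2) * Real.sqrt (2 * Real.pi) / (2 * a) * ∫ w in Ioi a, E w := by
  have h1 : (∫ x in Ioi (0:ℝ), E x / (x ^ 2 + a ^ 2))
      = ∫ x in Ioi (0:ℝ), ∫ v in Ioi (0:ℝ), E x * Real.exp (-((x ^ 2 + a ^ 2) * v)) :=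
    setIntegral_congr_fun measurableSet_Ioi (fun x _ => hpt_inner ha x)
  rw [h1, integral_integral_swap (prod_int ha)]
  rw [setIntegral_congr_fun measurableSet_Ioi (fun v hv => inner_gauss ha v hv)]
  set η : ℝ → ℝ := fun w => (w ^ 2 - a ^ 2) / (2 * a ^ 2) with hη
  have himg : η '' Ioi a = Ioi (0:ℝ) := by
    ext v
    constructor
    · rintro ⟨w, hw, rfl⟩
      simp only [mem_Ioi] at hw ⊢
      have h2 : 0 < w ^ 2 - a ^ 2 := by nlinarith
      exact div_pos h2 (by positivity)
    · intro hv
      simp only [mem_Ioi] at hv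
      refine ⟨Real.sqrt (2 * a ^ 2 * v + a ^ 2), ?_, ?_⟩
      · simp only [mem_Ioi]
        rw [Real.lt_sqrt ha.le]
        nlinarith [mul_pos (mul_pos (by norm_num : (0:ℝ) < 2) (pow_pos ha 2)) hv]
      · simp only [hη]
        rw [Real.sq_sqrt (by nlinarith)]
        field_simp
        ring
  have hinj : InjOn η (Ioi a) := by
    intro w hw w' hw' h
    simp only [mem_Ioi] at hw hw'
    simp only [hη] at h
    have hne : (2:ℝ) * a ^ 2 ≠ 0 := by positivity
    have h3 : w ^ 2 = w' ^ 2 := by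
      field_simp at h
      linarith
    have hw0 : 0 < w := lt_trans ha hw
    have hw0' : 0 < w' := lt_trans ha hw'
    calc w = Real.sqrt (w ^ 2) := (Real.sqrt_sq hw0.le).symm
      _ = Real.sqrt (w' ^ 2) := by rw [h3]
      _ = w' := Real.sqrt_sq hw0'.le
  have hderiv : ∀ w ∈ Ioi a, HasDerivWithinAt η (w / a ^ 2) (Ioi a) w := by
    intro w _
    apply HasDerivAt.hasDerivWithinAt
    have h4 : HasDerivAt (fun w : ℝ => (w ^ 2 - a ^ 2) / (2 * a ^ 2))
        (2 * w / (2 * a ^ 2)) w := by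
      have := ((hasDerivAt_pow 2 w).sub_const (a ^ 2)).div_const (2 * a ^ 2)
      simpa using this
    have h5 : 2 * w / (2 * a ^ 2) = w / a ^ 2 := by
      field_simp
    rw [hη, ← h5]
    exact h4
  rw [← himg, integral_image_eq_integral_abs_deriv_smul measurableSet_Ioi hderiv hinj,
    ← integral_const_mul]
  apply setIntegral_congr_fun measurableSet_Ioi
  intro w hw
  simp only [mem_Ioi] at hw
  have hw0 : 0 < w := lt_trans ha hw
  simp only [hη, smul_eq_mul]
  have e1 : a ^ 2 * ((w ^ 2 - a ^ 2) / (2 * a ^ 2)) = (w ^ 2 - a ^ 2) / 2 := by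
    field_simp
  have e2 : (w ^ 2 - a ^ 2) / (2 * a ^ 2) + 1/2 = w ^ 2 / (2 * a ^ 2) := by
    field_simp
    ring
  have e3 : Real.sqrt (Real.pi / (w ^ 2 / (2 * a ^ 2))) = Real.sqrt (2 * Real.pi) * a / w := by
    rw [show Real.pi / (w ^ 2 / (2 * a ^ 2)) = (2 * Real.pi) * ((a / w) ^ 2) by
      field_simp]
    rw [Real.sqrt_mul (by positivity), Real.sqrt_sq (by positivity : (0:ℝ) ≤ a / w)]
    ring
  have e4 : Real.exp (-((w ^ 2 - a ^ 2) / 2)) = Real.exp (a ^ 2 / 2) * E w := by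
    unfold E
    rw [← Real.exp_add]
    ring_nf
  rw [e1, e2, e3, e4, abs_of_pos (by positivity)]
  field_simp

lemma step3 :
    (∫ x in Ioi (0:ℝ), 2 * x ^ 2 * E x / (x ^ 2 + a ^ 2))
      = Real.sqrt (2 * Real.pi) - 2 * a ^ 2 * ∫ x in Ioi (0:ℝ), E x / (x ^ 2 + a ^ 2) := by
  have hint1 : IntegrableOn (fun x : ℝ => 2 * E x) (Ioi 0) :=
    (integrable_E.const_mul 2).integrableOn
  have hg := integrable_EQ ha
  have hint2 : IntegrableOn (fun x : ℝ => 2 * a ^ 2 * (E x / (x ^ 2 + a ^ 2))) (Ioi 0) :=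
    hg.const_mul _
  have hpt : ∀ x ∈ Ioi (0:ℝ), 2 * x ^ 2 * E x / (x ^ 2 + a ^ 2)
      = 2 * E x - 2 * a ^ 2 * (E x / (x ^ 2 + a ^ 2)) := by
    intro x _
    have h1 : x ^ 2 + a ^ 2 ≠ 0 := by positivity
    field_simp
    ring
  rw [setIntegral_congr_fun measurableSet_Ioi hpt, integral_sub hint1 hint2,
    integral_const_mul, integral_const_mul, integral_E_Ioi]
  ring

lemma main :
    (∫ s in Set.Ioi a, gaussCdf (-s) * (2 * a ^ 2) / (s ^ 2 * Real.sqrt (s ^ 2 - a ^ 2)))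
      = Real.exp (-a ^ 2 / 2) - Real.sqrt (2 * Real.pi) * a * gaussCdf (-a) := by
  rw [step1 ha, step2 ha, step3 ha, step4 ha, gaussCdf_neg]
  have ha' : a ≠ 0 := ne_of_gt ha
  have h1 : Real.sqrt (2 * Real.pi) ≠ 0 := ne_of_gt sqrt_two_pi_pos
  have h2 : Real.exp (-a^2/2) * Real.exp (a^2/2) = 1 := by
    rw [← Real.exp_add, show -a^2/2 + a^2/2 = 0 by ring, Real.exp_zero]
  set q := ∫ w in Ioi a, E w with hq
  set c := Real.sqrt (2 * Real.pi) with hc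
  set em := Real.exp (-a^2/2) with he1
  set ep := Real.exp (a^2/2) with he2
  have h3 : c * a * (c⁻¹ * q) = a * q := by field_simp
  rw [h3]
  have expand : c⁻¹ * em * (c - 2*a^2*(ep*c/(2*a)*q)) = em - (em*ep)*(a*q) := by
    field_simp
  rw [expand, h2, one_mul]

end Main

end GaussAux

/-- For every `y ≠ 0`,
`∫_{|y|}^∞ Φ(-s) · (2y²)/(s²√(s²-y²)) ds = e^{-y²/2} - √(2π)·|y|·Φ(-|y|)`. -/
theorem integral_gaussCdf_kernel (y : ℝ) (hy : y ≠ 0) :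
    (∫ s in Set.Ioi |y|, gaussCdf (-s) * (2 * y ^ 2) / (s ^ 2 * Real.sqrt (s ^ 2 - y ^ 2)))
      = Real.exp (-y ^ 2 / 2) - Real.sqrt (2 * Real.pi) * |y| * gaussCdf (-|y|) := by
  have ha : 0 < |y| := abs_pos.2 hy
  have h2 : y ^ 2 = |y| ^ 2 := (sq_abs y).symm
  rw [h2]
  exact GaussAux.main ha
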